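/- arXiv:1902.04998 — 2 statements merged into one kernel-verified Lean document; each statement's English description precedes it below -/
import Mathlib

section
/- For all real a, b with a, b ∈ [-1,1], it holds that (1/4)[(a²-1)² - (b²-1)²] ≤ (b³-b)(a-b) + 2(a-b)². -/
theorem stmt_3 (a b : ℝ) (ha : a ∈ Set.Icc (-1 : ℝ) 1) (hb : b ∈ Set.Icc (-1 : ℝ) 1) :
    (1 / 4) * ((a ^ 2 - 1) ^ 2 - (b ^ 2 - 1) ^ 2) ≤
      (b ^ 3 - b) * (a - b) + 2 * (a - b) ^ 2 := by
  obtain ⟨ha1, ha2⟩ := ha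
  obtain ⟨hb1, hb2⟩ := hb
  nlinarith [sq_nonneg (a - b), sq_nonneg (a + b), sq_nonneg (a*b - 1), sq_nonneg (a*b + 1),
    mul_nonneg (mul_nonneg (sub_nonneg.2 ha2) (sub_nonneg.2 hb2)) (sq_nonneg (a-b)),
    mul_nonneg (mul_nonneg (by linarith : (0:ℝ) ≤ a + 1) (by linarith : (0:ℝ) ≤ b + 1)) (sq_nonneg (a-b))]
end

section
/- Let L ∈ ℝ^{m×m} be symmetric positive definite, τ > 0, and define B₁ = L - (I - e^{-Lτ})⁻¹ L. Then B₁ is symmetric and negative definite. -/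
open Matrix

lemma aux_posdef_conj {n : ℕ} (U D : Matrix (Fin n) (Fin n) ℝ)
    (hU : U ∈ Matrix.unitaryGroup (Fin n) ℝ) (hD : D.PosDef) :
    (U * D * Uᴴ).PosDef := by
  refine Matrix.PosDef.of_dotProduct_mulVec_pos (Matrix.isHermitian_mul_mul_conjTranspose U hD.1) ?_
  intro x hx
  have hUU : U * Uᴴ = 1 := by
    simpa [Matrix.star_eq_conjTranspose] using (Matrix.mem_unitaryGroup_iff.mp hU)
  have hy : Uᴴ *ᵥ x ≠ 0 := by
    intro h
    apply hx
    have h2 := congrArg (fun v => U *ᵥ v) h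
    simp only [Matrix.mulVec_mulVec, hUU, Matrix.one_mulVec, Matrix.mulVec_zero] at h2
    exact h2
  have h3 := hD.dotProduct_mulVec_pos hy
  have hrw : U * D * Uᴴ = (Uᴴ)ᴴ * D * Uᴴ := by rw [Matrix.conjTranspose_conjTranspose]
  rw [hrw]
  simpa only [star_mulVec, dotProduct_mulVec, vecMul_vecMul] using h3

theorem stmt_14 (m : ℕ) (L : Matrix (Fin m) (Fin m) ℝ) (τ : ℝ) (hτ : 0 < τ)
    (hL : L.PosDef) (hLsymm : L.IsSymm) :
    ((L - (1 - NormedSpace.exp (-τ • L))⁻¹ * L).IsSymm) ∧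
    (-(L - (1 - NormedSpace.exp (-τ • L))⁻¹ * L)).PosDef := by
  have hH : L.IsHermitian := hL.1
  set U : Matrix (Fin m) (Fin m) ℝ := (hH.eigenvectorUnitary : Matrix (Fin m) (Fin m) ℝ) with hUdef
  have hUmem : U ∈ Matrix.unitaryGroup (Fin m) ℝ := hH.eigenvectorUnitary.2
  have hUU : U * Uᴴ = 1 := by
    simpa [Matrix.star_eq_conjTranspose] using (Matrix.mem_unitaryGroup_iff.mp hUmem)
  have hUU' : Uᴴ * U = 1 := by
    simpa [Matrix.star_eq_conjTranspose] using (Matrix.mem_unitaryGroup_iff'.mp hUmem)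
  set d : Fin m → ℝ := hH.eigenvalues with hddef
  have hdpos : ∀ i, 0 < d i := fun i => hL.eigenvalues_pos i
  have hspec : L = U * Matrix.diagonal d * Uᴴ := by
    have h := hH.spectral_theorem
    simpa [Matrix.star_eq_conjTranspose] using h
  -- exp computation
  set e : Fin m → ℝ := fun i => Real.exp (-τ * d i) with hedef
  have hepos : ∀ i, 0 < 1 - e i := by
    intro i
    have : e i < 1 := Real.exp_lt_one_iff.mpr (by nlinarith [hdpos i])
    linarith
  have hexp : NormedSpace.exp (-τ • L) = U * Matrix.diagonal e * Uᴴ := by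
    have h1 : -τ • L = U * Matrix.diagonal (fun i => -τ * d i) * Uᴴ := by
      rw [hspec]
      have hd : Matrix.diagonal (fun i => -τ * d i) = (-τ) • Matrix.diagonal d := by
        rw [← Matrix.diagonal_smul]
        congr 1
      rw [hd, mul_smul_comm, smul_mul_assoc]
    have hUinv : U⁻¹ = Uᴴ := Matrix.inv_eq_left_inv hUU'
    have hUisUnit : IsUnit U := by
      apply Matrix.isUnit_iff_isUnit_det U |>.mpr
      have : IsUnit (U * Uᴴ).det := by rw [hUU]; simp
      rw [Matrix.det_mul] at this
      exact isUnit_of_mul_isUnit_left this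
    rw [h1, ← hUinv, Matrix.exp_conj U _ hUisUnit, Matrix.exp_diagonal, Pi.exp_def]
    have hfun : (fun i => NormedSpace.exp (-τ * d i)) = e := by
      funext i
      rw [hedef]
      exact (congrFun Real.exp_eq_exp_ℝ (-τ * d i)).symm
    rw [hfun]
  -- inverse computation
  have hone : (1 : Matrix (Fin m) (Fin m) ℝ) = U * 1 * Uᴴ := by
    rw [Matrix.mul_one, hUU]
  have hsub : 1 - NormedSpace.exp (-τ • L) = U * Matrix.diagonal (fun i => 1 - e i) * Uᴴ := by
    rw [hexp]
    nth_rewrite 1 [hone]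
    rw [← Matrix.sub_mul, ← Matrix.mul_sub]
    congr 2
    rw [← Matrix.diagonal_one, Matrix.diagonal_sub]
  have hinv : (1 - NormedSpace.exp (-τ • L))⁻¹
      = U * Matrix.diagonal (fun i => (1 - e i)⁻¹) * Uᴴ := by
    rw [hsub]
    apply Matrix.inv_eq_right_inv
    calc (U * Matrix.diagonal (fun i => 1 - e i) * Uᴴ) *
          (U * Matrix.diagonal (fun i => (1 - e i)⁻¹) * Uᴴ)
        = U * (Matrix.diagonal (fun i => 1 - e i) * (Uᴴ * U) *
            Matrix.diagonal (fun i => (1 - e i)⁻¹)) * Uᴴ := by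
          simp only [Matrix.mul_assoc]
      _ = U * (Matrix.diagonal (fun i => 1 - e i) *
            Matrix.diagonal (fun i => (1 - e i)⁻¹)) * Uᴴ := by rw [hUU', Matrix.mul_one]
      _ = U * 1 * Uᴴ := by
          rw [Matrix.diagonal_mul_diagonal]
          have hfun : (fun i => (1 - e i) * (1 - e i)⁻¹) = fun _ : Fin m => (1 : ℝ) :=
            funext fun i => mul_inv_cancel₀ (ne_of_gt (hepos i))
          rw [hfun, Matrix.diagonal_one]
      _ = 1 := by rw [Matrix.mul_one, hUU]
  -- B₁ computation
  set g : Fin m → ℝ := fun i => d i - (1 - e i)⁻¹ * d i with hgdef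
  have hB : L - (1 - NormedSpace.exp (-τ • L))⁻¹ * L = U * Matrix.diagonal g * Uᴴ := by
    rw [hinv, hspec]
    calc U * Matrix.diagonal d * Uᴴ -
          (U * Matrix.diagonal (fun i => (1 - e i)⁻¹) * Uᴴ) * (U * Matrix.diagonal d * Uᴴ)
        = U * Matrix.diagonal d * Uᴴ -
          U * (Matrix.diagonal (fun i => (1 - e i)⁻¹) * (Uᴴ * U) * Matrix.diagonal d) * Uᴴ := by
          simp only [Matrix.mul_assoc]
      _ = U * Matrix.diagonal d * Uᴴ -
          U * (Matrix.diagonal (fun i => (1 - e i)⁻¹) * Matrix.diagonal d) * Uᴴ := by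
          rw [hUU', Matrix.mul_one]
      _ = U * (Matrix.diagonal d - Matrix.diagonal fun i => (1 - e i)⁻¹ * d i) * Uᴴ := by
          rw [Matrix.diagonal_mul_diagonal, ← Matrix.sub_mul, ← Matrix.mul_sub]
      _ = U * Matrix.diagonal g * Uᴴ := by rw [← Matrix.diagonal_sub]
  constructor
  · rw [hB]
    have hherm : (U * Matrix.diagonal g * Uᴴ).IsHermitian :=
      Matrix.isHermitian_mul_mul_conjTranspose U (Matrix.isHermitian_diagonal g)
    rw [Matrix.IsSymm, ← Matrix.conjTranspose_eq_transpose_of_trivial]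
    exact hherm
  · rw [hB]
    have hneg : -(U * Matrix.diagonal g * Uᴴ) = U * Matrix.diagonal (fun i => -(g i)) * Uᴴ := by
      rw [← Matrix.diagonal_neg]
      simp only [mul_neg, neg_mul]
    rw [hneg]
    apply aux_posdef_conj _ _ hUmem
    rw [Matrix.posDef_diagonal_iff]
    intro i
    have h1 : 1 < (1 - e i)⁻¹ := by
      rw [lt_inv_comm₀ (by norm_num) (hepos i)]
      have : 0 < e i := Real.exp_pos _
      linarith
    have := hdpos i
    simp only [hgdef]
    nlinarith
end
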